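/- Let S be a bounded linear operator on a complex Hilbert space and 0 < q < 1, 0 ≤ α ≤ 1. Then w_q(S)² ≤ q²‖α|S|² + (1-α)|S*|²‖ + (1-q²)(α‖|S|²‖ + (1-α)‖|S*|²‖) + 2q√(1-q²)‖|S*|^{2(1-α)}‖‖|S|^{2α}‖. -/

import Mathlib

set_option maxHeartbeats 1000000

noncomputable def qNumRadius {H : Type*} [NormedAddCommGroup H] [InnerProductSpace ℂ H]
    (q : ℂ) (T : H →L[ℂ] H) : ℝ :=
  sSup {r : ℝ | ∃ x y : H, ‖x‖ = 1 ∧ ‖y‖ = 1 ∧ (inner ℂ x y : ℂ) = q ∧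
    r = ‖(inner ℂ (T x) y : ℂ)‖}

/-- `|S|^t = (S*S)^(t/2)`, the real power of the absolute value of `S`, realized via the
continuous functional calculus applied to the positive operator `S*S`. -/
noncomputable def absRpow {H : Type*} [NormedAddCommGroup H] [InnerProductSpace ℂ H]
    [CompleteSpace H] (S : H →L[ℂ] H) (t : ℝ) : H →L[ℂ] H :=
  cfc (fun x : ℝ => |x| ^ (t / 2)) (ContinuousLinearMap.adjoint S * S)

open ContinuousLinearMap in
lemma absRpow_two' {H : Type*} [NormedAddCommGroup H] [InnerProductSpace ℂ H]
    [CompleteSpace H] (S : H →L[ℂ] H) : absRpow S 2 = adjoint S * S := by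
  have hpos : (0 : H →L[ℂ] H) ≤ adjoint S * S := by
    rw [← star_eq_adjoint]; exact star_mul_self_nonneg S
  have h : ∀ x ∈ spectrum ℝ (adjoint S * S), |x| ^ ((2:ℝ)/2) = x := by
    intro x hx
    have : (0:ℝ) ≤ x := spectrum_nonneg_of_nonneg hpos hx
    rw [abs_of_nonneg this]; norm_num
  rw [absRpow, cfc_congr h, cfc_id' ℝ (adjoint S * S)]

open ContinuousLinearMap in
lemma norm_absRpow_two' {H : Type*} [NormedAddCommGroup H] [InnerProductSpace ℂ H]
    [CompleteSpace H] (S : H →L[ℂ] H) : ‖absRpow S 2‖ = ‖S‖ ^ 2 := by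
  rw [absRpow_two', ← star_eq_adjoint, CStarRing.norm_star_mul_self, sq]

open ContinuousLinearMap in
lemma le_norm_absRpow {H : Type*} [NormedAddCommGroup H] [InnerProductSpace ℂ H]
    [CompleteSpace H] (S : H →L[ℂ] H) (hS : S ≠ 0) (t : ℝ) (ht : 0 ≤ t) :
    ‖S‖ ^ t ≤ ‖absRpow S t‖ := by
  haveI : Nontrivial (H →L[ℂ] H) := nontrivial_of_ne S 0 hS
  have hpos : (0 : H →L[ℂ] H) ≤ adjoint S * S := by
    rw [← star_eq_adjoint]; exact star_mul_self_nonneg S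
  have hsa : IsSelfAdjoint (adjoint S * S) := .of_nonneg hpos
  have hcont : ContinuousOn (fun x : ℝ => |x| ^ (t / 2)) (spectrum ℝ (adjoint S * S)) :=
    (continuous_abs.rpow_const (fun x => Or.inr (by positivity))).continuousOn
  have hmem : ‖adjoint S * S‖ ∈ spectrum ℝ (adjoint S * S) :=
    CStarAlgebra.norm_mem_spectrum_of_nonneg hpos
  have := norm_apply_le_norm_cfc (fun x : ℝ => |x| ^ (t / 2)) (adjoint S * S) hmem hcont hsa
  refine le_trans (le_of_eq ?_) this
  have hnorm : ‖adjoint S * S‖ = ‖S‖ * ‖S‖ := by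
    rw [← star_eq_adjoint]; exact CStarRing.norm_star_mul_self
  show ‖S‖ ^ t = ‖|‖adjoint S * S‖| ^ (t / 2)‖
  rw [hnorm, Real.norm_eq_abs, abs_of_nonneg (by positivity),
    abs_of_nonneg (by positivity : (0:ℝ) ≤ ‖S‖ * ‖S‖),
    show ‖S‖ * ‖S‖ = ‖S‖ ^ (2:ℝ) by rw [Real.rpow_two, sq],
    ← Real.rpow_mul (norm_nonneg S)]
  congr 1; ring

open ContinuousLinearMap in
lemma key_ineq {H : Type*} [NormedAddCommGroup H] [InnerProductSpace ℂ H] [CompleteSpace H]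
    (S : H →L[ℂ] H) (q : ℝ) (hq0 : 0 < q) (hq1 : q < 1)
    (α : ℝ) (hα0 : 0 ≤ α) (hα1 : α ≤ 1)
    (x y : H) (hx : ‖x‖ = 1) (hy : ‖y‖ = 1) (hxy : (inner ℂ x y : ℂ) = (q : ℂ)) :
    ‖(inner ℂ (S x) y : ℂ)‖ ^ 2
      ≤ q ^ 2 * ‖α • absRpow S 2 + (1 - α) • absRpow (ContinuousLinearMap.adjoint S) 2‖
        + (1 - q ^ 2) * (α * ‖absRpow S 2‖
            + (1 - α) * ‖absRpow (ContinuousLinearMap.adjoint S) 2‖)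
        + 2 * q * Real.sqrt (1 - q ^ 2) *
            (‖absRpow (ContinuousLinearMap.adjoint S) (2 * (1 - α))‖ *
              ‖absRpow S (2 * α)‖) := by
  set a : ℝ := ‖(inner ℂ (S x) x : ℂ)‖ with ha_def
  set c : ℝ := ‖S x‖ with hc_def
  set s : ℝ := Real.sqrt (1 - q ^ 2) with hs_def
  have hs2 : s ^ 2 = 1 - q ^ 2 := Real.sq_sqrt (by nlinarith)
  have hsnn : 0 ≤ s := Real.sqrt_nonneg _
  have ha_nn : 0 ≤ a := norm_nonneg _
  have hc_nn : 0 ≤ c := norm_nonneg _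
  -- decomposition of y
  set w : H := y - (q : ℂ) • x with hw_def
  have hw_norm : ‖w‖ ^ 2 = 1 - q ^ 2 := by
    have := @norm_sub_sq ℂ H _ _ _ y ((q : ℂ) • x)
    have h1 : (inner ℂ y ((q:ℂ) • x) : ℂ) = (q:ℂ) * (starRingEnd ℂ) (inner ℂ x y) := by
      rw [inner_smul_right, ← inner_conj_symm]
    rw [hxy] at h1
    simp only [Complex.conj_ofReal] at h1
    rw [hw_def]
    rw [this, h1, norm_smul, hx, hy]
    simp [Complex.norm_real, abs_of_nonneg hq0.le]
    ring
  -- step 1: r ≤ q * a + s * c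
  have hr1 : ‖(inner ℂ (S x) y : ℂ)‖ ≤ q * a + s * c := by
    have hy' : y = (q : ℂ) • x + w := by rw [hw_def]; abel
    have : (inner ℂ (S x) y : ℂ) = (q:ℂ) * inner ℂ (S x) x + inner ℂ (S x) w := by
      rw [hy', inner_add_right, inner_smul_right]
    rw [this]
    refine (norm_add_le _ _).trans ?_
    have h2 : ‖(q:ℂ) * (inner ℂ (S x) x : ℂ)‖ = q * a := by
      rw [norm_mul, Complex.norm_real, Real.norm_eq_abs, abs_of_nonneg hq0.le]
    have h3 : ‖(inner ℂ (S x) w : ℂ)‖ ≤ c * s := by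
      refine (norm_inner_le_norm _ _).trans ?_
      have : ‖w‖ = s := by
        rw [hs_def, ← hw_norm]; rw [Real.sqrt_sq (norm_nonneg _)]
      rw [this]
    rw [h2]; linarith [h3]
  set d : ℝ := ‖adjoint S x‖ with hd_def
  have hd_nn : 0 ≤ d := norm_nonneg _
  have hnormadj : ‖adjoint S‖ = ‖S‖ := by rw [← star_eq_adjoint]; exact norm_star S
  have haA : a ≤ c := by
    have := norm_inner_le_norm (𝕜 := ℂ) (S x) x
    rw [hx, mul_one] at this
    exact this
  have haB : a ≤ d := by
    have h1 : a = ‖(inner ℂ (adjoint S x) x : ℂ)‖ := by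
      rw [ha_def, norm_inner_symm (𝕜 := ℂ) (S x) x, ← adjoint_inner_left]
    have := norm_inner_le_norm (𝕜 := ℂ) (adjoint S x) x
    rw [hx, mul_one] at this
    rw [h1]; exact this
  have hcS : c ≤ ‖S‖ := by
    have := S.le_opNorm x
    rwa [hx, mul_one] at this
  -- inner ℂ product identities
  have e1 : (inner ℂ ((absRpow S 2) x) x : ℂ) = ((c ^ 2 : ℝ) : ℂ) := by
    rw [absRpow_two', ContinuousLinearMap.mul_apply, adjoint_inner_left,
      inner_self_eq_norm_sq_to_K]
    norm_cast
  have e2 : (inner ℂ ((absRpow (adjoint S) 2) x) x : ℂ) = ((d ^ 2 : ℝ) : ℂ) := by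
    rw [absRpow_two', ContinuousLinearMap.mul_apply, adjoint_inner_left,
      inner_self_eq_norm_sq_to_K]
    norm_cast
  -- (i) bound on a^2
  have ha2 : a ^ 2 ≤ ‖α • absRpow S 2 + (1 - α) • absRpow (adjoint S) 2‖ := by
    have hgeom : a ^ 2 ≤ (c ^ 2) ^ α * (d ^ 2) ^ (1 - α) := by
      rcases eq_or_lt_of_le ha_nn with h0 | h0
      · rw [← h0]; simpa using (by positivity : (0:ℝ) ≤ (c ^ 2) ^ α * (d ^ 2) ^ (1 - α))
      · have h1 : (a ^ 2 : ℝ) ^ α ≤ (c ^ 2) ^ α :=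
          Real.rpow_le_rpow (by positivity) (pow_le_pow_left₀ ha_nn haA 2) hα0
        have h2 : (a ^ 2 : ℝ) ^ (1 - α) ≤ (d ^ 2) ^ (1 - α) :=
          Real.rpow_le_rpow (by positivity) (pow_le_pow_left₀ ha_nn haB 2) (by linarith)
        have h3 : (a ^ 2 : ℝ) ^ α * (a ^ 2) ^ (1 - α) = a ^ 2 := by
          rw [← Real.rpow_add (by positivity)]
          norm_num
        calc a ^ 2 = (a ^ 2 : ℝ) ^ α * (a ^ 2) ^ (1 - α) := h3.symm
          _ ≤ (c ^ 2) ^ α * (d ^ 2) ^ (1 - α) :=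
              mul_le_mul h1 h2 (by positivity) (by positivity)
    have harith : (c ^ 2) ^ α * (d ^ 2) ^ (1 - α) ≤ α * c ^ 2 + (1 - α) * d ^ 2 :=
      Real.geom_mean_le_arith_mean2_weighted hα0 (by linarith) (by positivity) (by positivity)
        (by ring)
    have hT : (inner ℂ ((α • absRpow S 2 + (1 - α) • absRpow (adjoint S) 2) x) x : ℂ)
        = ((α * c ^ 2 + (1 - α) * d ^ 2 : ℝ) : ℂ) := by
      rw [ContinuousLinearMap.add_apply, ContinuousLinearMap.smul_apply,
        ContinuousLinearMap.smul_apply, inner_add_left,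
        RCLike.real_smul_eq_coe_smul (K := ℂ) α,
        RCLike.real_smul_eq_coe_smul (K := ℂ) (1 - α),
        inner_smul_left, inner_smul_left, e1, e2]
      push_cast
      simp [Complex.conj_ofReal]
    have hbound : α * c ^ 2 + (1 - α) * d ^ 2
        ≤ ‖α • absRpow S 2 + (1 - α) • absRpow (adjoint S) 2‖ := by
      set T := α • absRpow S 2 + (1 - α) • absRpow (adjoint S) 2 with hTdef
      have h1 : α * c ^ 2 + (1 - α) * d ^ 2 = ‖(inner ℂ (T x) x : ℂ)‖ := by
        rw [hT, Complex.norm_real, Real.norm_eq_abs,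
          abs_of_nonneg (add_nonneg (mul_nonneg hα0 (sq_nonneg c))
            (mul_nonneg (by linarith) (sq_nonneg d)))]
      have h2 : ‖(inner ℂ (T x) x : ℂ)‖ ≤ ‖T x‖ * ‖x‖ := norm_inner_le_norm _ _
      have h3 : ‖T x‖ ≤ ‖T‖ * ‖x‖ := T.le_opNorm x
      rw [hx] at h2 h3
      rw [h1]; simpa using h2.trans (by simpa using h3)
    linarith
  -- (ii) bound on c^2
  have hc2 : c ^ 2 ≤ α * ‖absRpow S 2‖ + (1 - α) * ‖absRpow (adjoint S) 2‖ := by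
    rw [norm_absRpow_two', norm_absRpow_two', hnormadj]
    have : c ^ 2 ≤ ‖S‖ ^ 2 := pow_le_pow_left₀ hc_nn hcS 2
    nlinarith
  -- (iii) bound on a * c
  have hac : a * c ≤ ‖absRpow (adjoint S) (2 * (1 - α))‖ * ‖absRpow S (2 * α)‖ := by
    by_cases hS : S = 0
    · have : c = 0 := by rw [hc_def, hS]; simp
      rw [this, mul_zero]
      positivity
    · have hSpos : (0:ℝ) < ‖S‖ := norm_pos_iff.mpr hS
      have hSadj : adjoint S ≠ 0 := by
        rw [← norm_pos_iff, hnormadj]; exact hSpos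
      have h1 : ‖S‖ ^ ((2 * (1 - α)) : ℝ) ≤ ‖absRpow (adjoint S) (2 * (1 - α))‖ := by
        have := le_norm_absRpow (adjoint S) hSadj (2 * (1 - α)) (by linarith)
        rwa [hnormadj] at this
      have h2 : ‖S‖ ^ ((2 * α) : ℝ) ≤ ‖absRpow S (2 * α)‖ :=
        le_norm_absRpow S hS (2 * α) (by linarith)
      have h3 : a * c ≤ ‖S‖ ^ ((2 * (1 - α)) : ℝ) * ‖S‖ ^ ((2 * α) : ℝ) := by
        rw [← Real.rpow_add hSpos]
        have : ((2 * (1 - α)) + (2 * α) : ℝ) = (2:ℝ) := by ring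
        rw [this, Real.rpow_two]
        nlinarith
      exact h3.trans (mul_le_mul h1 h2 (by positivity) (norm_nonneg _))
  -- combine
  have hr2 : ‖(inner ℂ (S x) y : ℂ)‖ ^ 2
      ≤ q ^ 2 * a ^ 2 + (1 - q ^ 2) * c ^ 2 + 2 * q * s * (a * c) := by
    have h0 : (0:ℝ) ≤ ‖(inner ℂ (S x) y : ℂ)‖ := norm_nonneg _
    have h1 : ‖(inner ℂ (S x) y : ℂ)‖ ^ 2 ≤ (q * a + s * c) ^ 2 := by
      apply pow_le_pow_left₀ h0 hr1
    calc ‖(inner ℂ (S x) y : ℂ)‖ ^ 2 ≤ (q * a + s * c) ^ 2 := h1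
      _ = q ^ 2 * a ^ 2 + s ^ 2 * c ^ 2 + 2 * q * s * (a * c) := by ring
      _ = q ^ 2 * a ^ 2 + (1 - q ^ 2) * c ^ 2 + 2 * q * s * (a * c) := by rw [hs2]
  have hq2nn : (0:ℝ) ≤ 1 - q ^ 2 := by nlinarith
  have t1 : q ^ 2 * a ^ 2
      ≤ q ^ 2 * ‖α • absRpow S 2 + (1 - α) • absRpow (adjoint S) 2‖ :=
    mul_le_mul_of_nonneg_left ha2 (by positivity)
  have t2 : (1 - q ^ 2) * c ^ 2
      ≤ (1 - q ^ 2) * (α * ‖absRpow S 2‖ + (1 - α) * ‖absRpow (adjoint S) 2‖) :=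
    mul_le_mul_of_nonneg_left hc2 hq2nn
  have t3 : 2 * q * s * (a * c)
      ≤ 2 * q * s * (‖absRpow (adjoint S) (2 * (1 - α))‖ * ‖absRpow S (2 * α)‖) :=
    mul_le_mul_of_nonneg_left hac (by positivity)
  linarith

theorem stmt9 {H : Type*} [NormedAddCommGroup H] [InnerProductSpace ℂ H] [CompleteSpace H]
    (S : H →L[ℂ] H) (q : ℝ) (hq0 : 0 < q) (hq1 : q < 1)
    (α : ℝ) (hα0 : 0 ≤ α) (hα1 : α ≤ 1) :
    qNumRadius (q : ℂ) S ^ 2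
      ≤ q ^ 2 * ‖α • absRpow S 2 + (1 - α) • absRpow (ContinuousLinearMap.adjoint S) 2‖
        + (1 - q ^ 2) * (α * ‖absRpow S 2‖
            + (1 - α) * ‖absRpow (ContinuousLinearMap.adjoint S) 2‖)
        + 2 * q * Real.sqrt (1 - q ^ 2) *
            (‖absRpow (ContinuousLinearMap.adjoint S) (2 * (1 - α))‖ *
              ‖absRpow S (2 * α)‖) := by
  set B : ℝ := q ^ 2 * ‖α • absRpow S 2 + (1 - α) • absRpow (ContinuousLinearMap.adjoint S) 2‖
        + (1 - q ^ 2) * (α * ‖absRpow S 2‖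
            + (1 - α) * ‖absRpow (ContinuousLinearMap.adjoint S) 2‖)
        + 2 * q * Real.sqrt (1 - q ^ 2) *
            (‖absRpow (ContinuousLinearMap.adjoint S) (2 * (1 - α))‖ *
              ‖absRpow S (2 * α)‖) with hB
  have hq2 : (0:ℝ) ≤ 1 - q ^ 2 := by nlinarith
  have hB_nn : 0 ≤ B := by
    have h1 : (0:ℝ) ≤ q ^ 2 * ‖α • absRpow S 2 + (1 - α) • absRpow (ContinuousLinearMap.adjoint S) 2‖ := by positivity
    have h2 : (0:ℝ) ≤ (1 - q ^ 2) * (α * ‖absRpow S 2‖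
            + (1 - α) * ‖absRpow (ContinuousLinearMap.adjoint S) 2‖) := by
      apply mul_nonneg hq2
      have := norm_nonneg (absRpow S 2)
      have := norm_nonneg (absRpow (ContinuousLinearMap.adjoint S) 2)
      nlinarith
    have h3 : (0:ℝ) ≤ 2 * q * Real.sqrt (1 - q ^ 2) *
            (‖absRpow (ContinuousLinearMap.adjoint S) (2 * (1 - α))‖ *
              ‖absRpow S (2 * α)‖) := by positivity
    linarith
  have hub : ∀ r ∈ {r : ℝ | ∃ x y : H, ‖x‖ = 1 ∧ ‖y‖ = 1 ∧ (inner ℂ x y : ℂ) = (q:ℂ) ∧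
      r = ‖(inner ℂ (S x) y : ℂ)‖}, r ≤ Real.sqrt B := by
    rintro r ⟨x, y, hx, hy, hxy, rfl⟩
    have := key_ineq S q hq0 hq1 α hα0 hα1 x y hx hy hxy
    rw [← hB] at this
    exact (Real.le_sqrt (norm_nonneg _) hB_nn).mpr this
  have hsup_le : qNumRadius (q:ℂ) S ≤ Real.sqrt B := Real.sSup_le hub (Real.sqrt_nonneg _)
  have hsup_nn : 0 ≤ qNumRadius (q:ℂ) S := by
    apply Real.sSup_nonneg
    rintro r ⟨x, y, hx, hy, hxy, rfl⟩
    exact norm_nonneg _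
  calc qNumRadius (q:ℂ) S ^ 2 ≤ Real.sqrt B ^ 2 := by
        apply sq_le_sq' (by linarith) hsup_le
    _ = B := Real.sq_sqrt hB_nn
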